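/- arXiv:cs/9905010 — 3 statements merged into one kernel-verified Lean document; each statement's English description precedes it below -/
import Mathlib

section
/- Under the stated setup, fix λ ∈ ℝ^n with Z_λ finite and a candidate property function c : X → ℕ, and for α ∈ ℝ such that Z' := ∑_{x∈X} e^{α c(x)} p_λ(x) is finite, define the extended model p'(x) = (Z')^{-1} e^{α c(x)} p_λ(x), with p'(y) = ∑_{x∈X(y)} p'(x) and extended log-likelihood L'(α) = ∑_{y∈𝒴} ln p'(y). Then the approximate gain G_c(α, λ) = ∑_{y∈𝒴} (1 + k_λ[α c] − p_λ[e^{α c}]) is a lower bound on the true gain in log-likelihood: G_c(α, λ) ≤ L'(α) − L(λ). -/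
/- Common setup: log-linear models over proof trees (complete data X) and
   queries (incomplete data Y). -/

variable {X Y : Type*}

/-- `ν_#(x) = ∑ i, ν_i(x)`. -/
def nuSharp {n : ℕ} (ν : Fin n → X → ℕ) (x : X) : ℕ := ∑ i, ν i x

/-- weighted property sum `λ·ν(x)`. -/
noncomputable def wdot {n : ℕ} (l : Fin n → ℝ) (ν : Fin n → X → ℕ) (x : X) : ℝ :=
  ∑ i, l i * (ν i x : ℝ)

/-- normalizing constant `Z_λ`. -/
noncomputable def Zpart (p0 : X → ℝ) {n : ℕ} (ν : Fin n → X → ℕ) (l : Fin n → ℝ) : ℝ :=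
  ∑' x : X, Real.exp (wdot l ν x) * p0 x

/-- log-linear distribution `p_λ(x)`. -/
noncomputable def pLL (p0 : X → ℝ) {n : ℕ} (ν : Fin n → X → ℕ) (l : Fin n → ℝ) (x : X) : ℝ :=
  (Zpart p0 ν l)⁻¹ * Real.exp (wdot l ν x) * p0 x

/-- incomplete-data probability `p_λ(y) = ∑_{x ∈ X(y)} p_λ(x)`. -/
noncomputable def pLLY (Yf : X → Y) (p0 : X → ℝ) {n : ℕ} (ν : Fin n → X → ℕ)
    (l : Fin n → ℝ) (y : Y) : ℝ :=
  ∑' x : {x : X // Yf x = y}, pLL p0 ν l x.1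

/-- incomplete-data log-likelihood `L(λ) = ∑_{y ∈ 𝒴} ln p_λ(y)`. -/
noncomputable def LL (Yf : X → Y) (p0 : X → ℝ) {n : ℕ} (ν : Fin n → X → ℕ)
    (𝒴 : Multiset Y) (l : Fin n → ℝ) : ℝ :=
  (𝒴.map fun y => Real.log (pLLY Yf p0 ν l y)).sum

/-- expectation `p_λ[f]`. -/
noncomputable def pExp (p0 : X → ℝ) {n : ℕ} (ν : Fin n → X → ℕ) (l : Fin n → ℝ)
    (f : X → ℝ) : ℝ :=
  ∑' x : X, pLL p0 ν l x * f x

/-- conditional expectation `k_λ[f]` given observed `y`. -/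
noncomputable def kExp (Yf : X → Y) (p0 : X → ℝ) {n : ℕ} (ν : Fin n → X → ℕ)
    (l : Fin n → ℝ) (y : Y) (f : X → ℝ) : ℝ :=
  ∑' x : {x : X // Yf x = y}, (pLL p0 ν l x.1 / pLLY Yf p0 ν l y) * f x.1

/-- auxiliary function
`A(γ,λ) = ∑_{y∈𝒴} (1 + k_λ[γ·ν] − p_λ[∑ i, ν̄_i e^{γ_i ν_#}])`. -/
noncomputable def Aaux (Yf : X → Y) (p0 : X → ℝ) {n : ℕ} (ν : Fin n → X → ℕ)
    (𝒴 : Multiset Y) (γ l : Fin n → ℝ) : ℝ :=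
  (𝒴.map fun y =>
    1 + kExp Yf p0 ν l y (fun x => wdot γ ν x)
      - pExp p0 ν l (fun x =>
          ∑ i, ((ν i x : ℝ) / (nuSharp ν x : ℝ)) * Real.exp (γ i * (nuSharp ν x : ℝ)))).sum

/-- approximate gain `G_c(α,λ)`. -/
noncomputable def Gc (Yf : X → Y) (p0 : X → ℝ) {n : ℕ} (ν : Fin n → X → ℕ)
    (𝒴 : Multiset Y) (c : X → ℕ) (l : Fin n → ℝ) (α : ℝ) : ℝ :=
  (𝒴.map fun y =>
    1 + kExp Yf p0 ν l y (fun x => α * (c x : ℝ))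
      - pExp p0 ν l (fun x => Real.exp (α * (c x : ℝ)))).sum

/-- normalizing constant `Z'` of the extended model. -/
noncomputable def Zext (p0 : X → ℝ) {n : ℕ} (ν : Fin n → X → ℕ) (l : Fin n → ℝ)
    (c : X → ℕ) (α : ℝ) : ℝ :=
  ∑' x : X, Real.exp (α * (c x : ℝ)) * pLL p0 ν l x

/-- extended model `p'(x) = (Z')⁻¹ e^{α c(x)} p_λ(x)`. -/
noncomputable def pext (p0 : X → ℝ) {n : ℕ} (ν : Fin n → X → ℕ) (l : Fin n → ℝ)
    (c : X → ℕ) (α : ℝ) (x : X) : ℝ :=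
  (Zext p0 ν l c α)⁻¹ * Real.exp (α * (c x : ℝ)) * pLL p0 ν l x

/-- `p'(y) = ∑_{x ∈ X(y)} p'(x)`. -/
noncomputable def pextY (Yf : X → Y) (p0 : X → ℝ) {n : ℕ} (ν : Fin n → X → ℕ)
    (l : Fin n → ℝ) (c : X → ℕ) (α : ℝ) (y : Y) : ℝ :=
  ∑' x : {x : X // Yf x = y}, pext p0 ν l c α x.1

/-- extended log-likelihood `L'(α) = ∑_{y∈𝒴} ln p'(y)`. -/
noncomputable def Lext (Yf : X → Y) (p0 : X → ℝ) {n : ℕ} (ν : Fin n → X → ℕ)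
    (𝒴 : Multiset Y) (l : Fin n → ℝ) (c : X → ℕ) (α : ℝ) : ℝ :=
  (𝒴.map fun y => Real.log (pextY Yf p0 ν l c α y)).sum

/-- The approximate gain is a lower bound on the true gain in log-likelihood:
`G_c(α,λ) ≤ L'(α) − L(λ)`. -/
theorem gain_lower_bound
    {X Y : Type*} [Countable X] (Yf : X → Y)
    (p0 : X → ℝ) (hp0 : ∀ x, 0 < p0 x) (hp0sum : ∑' x : X, p0 x = 1)
    {n : ℕ} (ν : Fin n → X → ℕ) (hν : ∀ x, 1 ≤ nuSharp ν x)
    (𝒴 : Multiset Y) (l : Fin n → ℝ) (c : X → ℕ) (α : ℝ)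
    (hZl : Summable fun x : X => Real.exp (wdot l ν x) * p0 x)
    (hZext : Summable fun x : X => Real.exp (α * (c x : ℝ)) * pLL p0 ν l x)
    (hpos : ∀ y ∈ 𝒴, 0 < pLLY Yf p0 ν l y)
    (hpos' : ∀ y ∈ 𝒴, 0 < pextY Yf p0 ν l c α y)
    (hksum : ∀ y ∈ 𝒴, Summable fun x : {x : X // Yf x = y} =>
      (pLL p0 ν l x.1 / pLLY Yf p0 ν l y) * (α * (c x.1 : ℝ)))
    (hpsum : Summable fun x : X => pLL p0 ν l x * Real.exp (α * (c x : ℝ))) :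
    Gc Yf p0 ν 𝒴 c l α ≤ Lext Yf p0 ν 𝒴 l c α - LL Yf p0 ν 𝒴 l := by

  classical
  rw [Lext, LL, ← Multiset.sum_map_sub, Gc]
  refine Multiset.sum_map_le_sum_map _ _ ?_
  intro y hy
  -- notation
  set Zp := Zpart p0 ν l with hZp
  set Z' := Zext p0 ν l c α with hZ'
  set S := pLLY Yf p0 ν l y with hS
  have hSpos : 0 < S := hpos y hy
  -- pLL is nonnegative
  have hZppos : 0 ≤ Zp := by
    rw [hZp, Zpart]
    exact tsum_nonneg fun x => mul_nonneg (Real.exp_pos _).le (hp0 x).le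
  have hpLLnn : ∀ x : X, 0 ≤ pLL p0 ν l x := by
    intro x
    unfold pLL
    have := (hp0 x).le
    positivity
  -- summability of pLL
  have hpLLsum : Summable fun x : X => pLL p0 ν l x := by
    have := hZl.mul_left (Zp⁻¹)
    refine this.congr fun x => ?_
    simp [pLL, mul_assoc, hZp]
  have hsubS : Summable fun x : {x : X // Yf x = y} => pLL p0 ν l x.1 :=
    hpLLsum.subtype _
  have hsubT : Summable fun x : {x : X // Yf x = y} =>
      Real.exp (α * (c x.1 : ℝ)) * pLL p0 ν l x.1 := hZext.subtype _
  set T : ℝ := ∑' x : {x : X // Yf x = y}, Real.exp (α * (c x.1 : ℝ)) * pLL p0 ν l x.1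
    with hT
  -- pextY = Z'⁻¹ * T
  have hpextY : pextY Yf p0 ν l c α y = Z'⁻¹ * T := by
    rw [pextY, hT, ← tsum_mul_left]
    exact tsum_congr fun x => by rw [pext, mul_assoc]
  -- Z' > 0
  have hZ'nn : 0 ≤ Z' := by
    rw [hZ', Zext]
    exact tsum_nonneg fun x => mul_nonneg (Real.exp_pos _).le (hpLLnn x)
  have hZ'pos : 0 < Z' := by
    rcases hZ'nn.lt_or_eq with h | h
    · exact h
    · exfalso
      have := hpos' y hy
      rw [hpextY, ← h, inv_zero, zero_mul] at this
      exact lt_irrefl 0 this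
  -- T > 0
  have hTpos : 0 < T := by
    have h1 := hpos' y hy
    rw [hpextY] at h1
    nlinarith [inv_pos.mpr hZ'pos]
  -- pExp of exp equals Z'
  have hpexp : pExp p0 ν l (fun x => Real.exp (α * (c x : ℝ))) = Z' := by
    rw [pExp, hZ', Zext]
    exact tsum_congr fun x => mul_comm _ _
  -- S as a tsum
  have hStsum : S = ∑' x : {x : X // Yf x = y}, pLL p0 ν l x.1 := rfl
  -- Jensen-type bound: kExp ≤ log T - log S
  have hk : kExp Yf p0 ν l y (fun x => α * (c x : ℝ)) ≤ Real.log T - Real.log S := by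
    have hgsum : Summable fun x : {x : X // Yf x = y} =>
        (pLL p0 ν l x.1 / S) * (Real.log (T / S) - 1)
          + Real.exp (α * (c x.1 : ℝ)) * pLL p0 ν l x.1 * T⁻¹ :=
      ((hsubS.div_const S).mul_right _).add (hsubT.mul_right _)
    have hpt : ∀ x : {x : X // Yf x = y},
        (pLL p0 ν l x.1 / S) * (α * (c x.1 : ℝ)) ≤
          (pLL p0 ν l x.1 / S) * (Real.log (T / S) - 1)
            + Real.exp (α * (c x.1 : ℝ)) * pLL p0 ν l x.1 * T⁻¹ := by
      intro x
      have hq : 0 ≤ pLL p0 ν l x.1 / S := div_nonneg (hpLLnn x.1) hSpos.le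
      have hlog : Real.log (Real.exp (α * (c x.1 : ℝ)) * (S / T)) ≤
          Real.exp (α * (c x.1 : ℝ)) * (S / T) - 1 :=
        Real.log_le_sub_one_of_pos (by positivity)
      rw [Real.log_mul (Real.exp_ne_zero _) (by positivity), Real.log_exp,
        Real.log_div hSpos.ne' hTpos.ne'] at hlog
      have hb : α * (c x.1 : ℝ) ≤ Real.exp (α * (c x.1 : ℝ)) * (S / T) - 1
          + Real.log (T / S) := by
        rw [Real.log_div hTpos.ne' hSpos.ne']
        linarith
      calc (pLL p0 ν l x.1 / S) * (α * (c x.1 : ℝ))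
          ≤ (pLL p0 ν l x.1 / S) * (Real.exp (α * (c x.1 : ℝ)) * (S / T) - 1
              + Real.log (T / S)) := mul_le_mul_of_nonneg_left hb hq
        _ = (pLL p0 ν l x.1 / S) * (Real.log (T / S) - 1)
              + Real.exp (α * (c x.1 : ℝ)) * pLL p0 ν l x.1 * T⁻¹ := by
            field_simp
            ring
    have hle : kExp Yf p0 ν l y (fun x => α * (c x : ℝ)) ≤
        ∑' x : {x : X // Yf x = y},
          ((pLL p0 ν l x.1 / S) * (Real.log (T / S) - 1)
            + Real.exp (α * (c x.1 : ℝ)) * pLL p0 ν l x.1 * T⁻¹) :=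
      Summable.tsum_le_tsum hpt (hksum y hy) hgsum
    have hsum1 : (∑' x : {x : X // Yf x = y},
        (pLL p0 ν l x.1 / S) * (Real.log (T / S) - 1)) = Real.log (T / S) - 1 := by
      rw [tsum_mul_right]
      have : (∑' x : {x : X // Yf x = y}, pLL p0 ν l x.1 / S) = 1 := by
        rw [tsum_div_const, ← hStsum, div_self hSpos.ne']
      rw [this, one_mul]
    have hsum2 : (∑' x : {x : X // Yf x = y},
        Real.exp (α * (c x.1 : ℝ)) * pLL p0 ν l x.1 * T⁻¹) = 1 := by
      rw [tsum_mul_right, ← hT, mul_inv_cancel₀ hTpos.ne']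
    rw [Summable.tsum_add ((hsubS.div_const S).mul_right _) (hsubT.mul_right _), hsum1, hsum2] at hle
    calc kExp Yf p0 ν l y (fun x => α * (c x : ℝ)) ≤ Real.log (T / S) - 1 + 1 := hle
      _ = Real.log T - Real.log S := by
          rw [Real.log_div hTpos.ne' hSpos.ne']; ring
  -- bound for the normalizer: 1 - Z' ≤ - log Z'
  have hZ'log : Real.log Z' ≤ Z' - 1 := Real.log_le_sub_one_of_pos hZ'pos
  -- put together
  have hlogpext : Real.log (pextY Yf p0 ν l c α y) = -Real.log Z' + Real.log T := by
    rw [hpextY, Real.log_mul (inv_ne_zero hZ'pos.ne') hTpos.ne', Real.log_inv]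
  rw [hpexp, hlogpext]
  linarith
end

section
/- Under the stated setup, for every λ ∈ ℝ^n with Z_λ finite and every γ ∈ ℝ^n with Z_{γ+λ} finite, the incomplete-data log-likelihood difference satisfies the Jensen lower bound L(γ + λ) − L(λ) ≥ ∑_{y∈𝒴} (k_λ[γ·ν] − ln p_λ[e^{γ·ν}]). -/
/- Common setup: log-linear models over proof trees (complete data X) and
   queries (incomplete data Y). -/

variable {X Y : Type*}

section AuxJensen

lemma wdot_add' {X : Type*} {n : ℕ} (γ l : Fin n → ℝ) (ν : Fin n → X → ℕ) (x : X) :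
    wdot (γ + l) ν x = wdot γ ν x + wdot l ν x := by
  simp [wdot, add_mul, Finset.sum_add_distrib]

lemma jensen_tsum' {ι : Type*} (w f : ι → ℝ) (hw0 : ∀ i, 0 ≤ w i)
    (hw : Summable w) (hw1 : ∑' i, w i = 1)
    (hwf : Summable fun i => w i * f i)
    (hwe : Summable fun i => w i * Real.exp (f i)) :
    ∑' i, w i * f i ≤ Real.log (∑' i, w i * Real.exp (f i)) := by
  set m := ∑' i, w i * f i with hm
  have hwem : Summable fun i => w i * Real.exp (f i) * Real.exp (-m) := hwe.mul_right _
  have hlhs : Summable fun i => w i + (w i * f i - m * w i) :=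
    hw.add (hwf.sub (hw.mul_left m))
  have hle : ∀ i, w i + (w i * f i - m * w i) ≤ w i * Real.exp (f i) * Real.exp (-m) := by
    intro i
    have h := Real.add_one_le_exp (f i - m)
    have h2 := mul_le_mul_of_nonneg_left h (hw0 i)
    calc w i + (w i * f i - m * w i) = w i * (f i - m + 1) := by ring
      _ ≤ w i * Real.exp (f i - m) := h2
      _ = w i * Real.exp (f i) * Real.exp (-m) := by
          rw [Real.exp_sub, Real.exp_neg]; ring
  have h2 := Summable.tsum_le_tsum hle hlhs hwem
  rw [Summable.tsum_add hw (hwf.sub (hw.mul_left m)), Summable.tsum_sub hwf (hw.mul_left m),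
    tsum_mul_left, hw1, tsum_mul_right, ← hm] at h2
  have h3 : (1 : ℝ) ≤ (∑' i, w i * Real.exp (f i)) * Real.exp (-m) := by linarith
  have h4 : Real.exp m ≤ ∑' i, w i * Real.exp (f i) := by
    rw [Real.exp_neg, ← div_eq_mul_inv, le_div_iff₀ (Real.exp_pos m), one_mul] at h3
    exact h3
  calc m = Real.log (Real.exp m) := (Real.log_exp m).symm
    _ ≤ Real.log (∑' i, w i * Real.exp (f i)) := Real.log_le_log (Real.exp_pos m) h4

lemma multiset_sum_map_le {α : Type*} (s : Multiset α) (f g : α → ℝ)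
    (h : ∀ a ∈ s, f a ≤ g a) : (s.map f).sum ≤ (s.map g).sum := by
  induction s using Multiset.induction with
  | empty => simp
  | cons a t ih =>
    simp only [Multiset.map_cons, Multiset.sum_cons]
    exact add_le_add (h a (Multiset.mem_cons_self a t))
      (ih fun b hb => h b (Multiset.mem_cons_of_mem hb))

lemma multiset_sum_map_sub {α : Type*} (s : Multiset α) (f g : α → ℝ) :
    (s.map fun a => f a - g a).sum = (s.map f).sum - (s.map g).sum := by
  induction s using Multiset.induction with
  | empty => simp
  | cons a t ih => simp [ih]; ring

end AuxJensen

/-- Jensen lower bound on the log-likelihood difference: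
`L(γ+λ) − L(λ) ≥ ∑_{y∈𝒴} (k_λ[γ·ν] − ln p_λ[e^{γ·ν}])`. -/
theorem loglikelihood_difference_jensen_bound
    {X Y : Type*} [Countable X] (Yf : X → Y)
    (p0 : X → ℝ) (hp0 : ∀ x, 0 < p0 x) (hp0sum : ∑' x : X, p0 x = 1)
    {n : ℕ} (ν : Fin n → X → ℕ)
    (𝒴 : Multiset Y) (l γ : Fin n → ℝ)
    (hZl : Summable fun x : X => Real.exp (wdot l ν x) * p0 x)
    (hZgl : Summable fun x : X => Real.exp (wdot (γ + l) ν x) * p0 x)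
    (hpos : ∀ y ∈ 𝒴, 0 < pLLY Yf p0 ν l y)
    (hksum : ∀ y ∈ 𝒴, Summable fun x : {x : X // Yf x = y} =>
      (pLL p0 ν l x.1 / pLLY Yf p0 ν l y) * wdot γ ν x.1)
    (hpsum : Summable fun x : X => pLL p0 ν l x * Real.exp (wdot γ ν x)) :
    (𝒴.map fun y => kExp Yf p0 ν l y (fun x => wdot γ ν x)
      - Real.log (pExp p0 ν l (fun x => Real.exp (wdot γ ν x)))).sum ≤
    LL Yf p0 ν 𝒴 (γ + l) - LL Yf p0 ν 𝒴 l := by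
  -- basic positivity facts
  have hXne : Nonempty X := by
    by_contra h
    rw [not_nonempty_iff] at h
    rw [tsum_empty] at hp0sum
    norm_num at hp0sum
  obtain ⟨x0⟩ := hXne
  have hZlpos : 0 < Zpart p0 ν l :=
    Summable.tsum_pos hZl (fun x => le_of_lt (mul_pos (Real.exp_pos _) (hp0 x))) x0
      (mul_pos (Real.exp_pos _) (hp0 x0))
  have hZglpos : 0 < Zpart p0 ν (γ + l) :=
    Summable.tsum_pos hZgl (fun x => le_of_lt (mul_pos (Real.exp_pos _) (hp0 x))) x0
      (mul_pos (Real.exp_pos _) (hp0 x0))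
  have hpLLpos : ∀ x, 0 < pLL p0 ν l x := fun x =>
    mul_pos (mul_pos (inv_pos.2 hZlpos) (Real.exp_pos _)) (hp0 x)
  have hpl : Summable (pLL p0 ν l) := by
    exact (hZl.mul_left (Zpart p0 ν l)⁻¹).congr fun x => by rw [pLL, mul_assoc]
  -- value of pExp
  have hident : ∀ x, pLL p0 ν l x * Real.exp (wdot γ ν x)
      = (Zpart p0 ν l)⁻¹ * (Real.exp (wdot (γ + l) ν x) * p0 x) := by
    intro x
    rw [pLL, wdot_add', Real.exp_add]; ring
  have hpexp : pExp p0 ν l (fun x => Real.exp (wdot γ ν x))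
      = Zpart p0 ν (γ + l) / Zpart p0 ν l := by
    rw [pExp, tsum_congr hident, tsum_mul_left, inv_mul_eq_div]
    rfl
  have hratio : 0 < Zpart p0 ν (γ + l) / Zpart p0 ν l := div_pos hZglpos hZlpos
  -- pLL for γ + l in terms of pLL for l
  have hrel : ∀ x, pLL p0 ν (γ + l) x
      = (Zpart p0 ν l / Zpart p0 ν (γ + l)) * (pLL p0 ν l x * Real.exp (wdot γ ν x)) := by
    intro x
    rw [pLL, pLL, wdot_add', Real.exp_add]
    field_simp
  -- per-observation inequality
  have key : ∀ y ∈ 𝒴,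
      kExp Yf p0 ν l y (fun x => wdot γ ν x)
        - Real.log (pExp p0 ν l (fun x => Real.exp (wdot γ ν x)))
      ≤ Real.log (pLLY Yf p0 ν (γ + l) y) - Real.log (pLLY Yf p0 ν l y) := by
    intro y hy
    have hP : 0 < pLLY Yf p0 ν l y := hpos y hy
    have hplS : Summable (fun x : {x : X // Yf x = y} => pLL p0 ν l x.1) :=
      hpl.subtype {x | Yf x = y}
    have hpeS : Summable (fun x : {x : X // Yf x = y} =>
        pLL p0 ν l x.1 * Real.exp (wdot γ ν x.1)) :=
      hpsum.subtype {x | Yf x = y}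
    set P := pLLY Yf p0 ν l y with hPdef
    have hw : Summable (fun x : {x : X // Yf x = y} => pLL p0 ν l x.1 / P) :=
      hplS.div_const P
    have hw1 : ∑' x : {x : X // Yf x = y}, pLL p0 ν l x.1 / P = 1 := by
      rw [tsum_div_const, ← pLLY, ← hPdef, div_self hP.ne']
    have hwe : Summable (fun x : {x : X // Yf x = y} =>
        (pLL p0 ν l x.1 / P) * Real.exp (wdot γ ν x.1)) := by
      have := hpeS.div_const P
      simpa [div_mul_eq_mul_div] using this
    have hj := jensen_tsum' (fun x : {x : X // Yf x = y} => pLL p0 ν l x.1 / P)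
      (fun x => wdot γ ν x.1) (fun x => le_of_lt (div_pos (hpLLpos x.1) hP))
      hw hw1 (hksum y hy) hwe
    -- rewrite the rhs of Jensen
    have hSne : Nonempty {x : X // Yf x = y} := by
      by_contra h
      rw [not_nonempty_iff] at h
      rw [hPdef, pLLY, tsum_empty] at hP
      norm_num at hP
    obtain ⟨s0⟩ := hSne
    have hT : 0 < ∑' x : {x : X // Yf x = y}, pLL p0 ν l x.1 * Real.exp (wdot γ ν x.1) :=
      Summable.tsum_pos hpeS (fun x => le_of_lt (mul_pos (hpLLpos x.1) (Real.exp_pos _))) s0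
        (mul_pos (hpLLpos s0.1) (Real.exp_pos _))
    set T := ∑' x : {x : X // Yf x = y}, pLL p0 ν l x.1 * Real.exp (wdot γ ν x.1) with hTdef
    have htsum : ∑' x : {x : X // Yf x = y},
        (pLL p0 ν l x.1 / P) * Real.exp (wdot γ ν x.1) = T / P := by
      rw [tsum_congr (fun x : {x : X // Yf x = y} => by
        rw [div_mul_eq_mul_div] :
        ∀ x : {x : X // Yf x = y}, (pLL p0 ν l x.1 / P) * Real.exp (wdot γ ν x.1)
          = pLL p0 ν l x.1 * Real.exp (wdot γ ν x.1) / P), tsum_div_const]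
    rw [htsum, Real.log_div hT.ne' hP.ne'] at hj
    -- compute pLLY for γ + l
    have hY' : pLLY Yf p0 ν (γ + l) y = (Zpart p0 ν l / Zpart p0 ν (γ + l)) * T := by
      rw [pLLY, tsum_congr (fun x : {x : X // Yf x = y} => hrel x.1), tsum_mul_left]
    have hratio' : 0 < Zpart p0 ν l / Zpart p0 ν (γ + l) := div_pos hZlpos hZglpos
    rw [hY', Real.log_mul hratio'.ne' hT.ne', hpexp,
      Real.log_div hZlpos.ne' hZglpos.ne', Real.log_div hZglpos.ne' hZlpos.ne']
    have hj' : kExp Yf p0 ν l y (fun x => wdot γ ν x) ≤ Real.log T - Real.log P := hj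
    linarith
  calc (𝒴.map fun y => kExp Yf p0 ν l y (fun x => wdot γ ν x)
      - Real.log (pExp p0 ν l (fun x => Real.exp (wdot γ ν x)))).sum
      ≤ (𝒴.map fun y => Real.log (pLLY Yf p0 ν (γ + l) y)
          - Real.log (pLLY Yf p0 ν l y)).sum := multiset_sum_map_le _ _ _ key
    _ = LL Yf p0 ν 𝒴 (γ + l) - LL Yf p0 ν 𝒴 l := by
        rw [LL, LL, multiset_sum_map_sub]
end

section
/- Under the stated setup, for every λ ∈ ℝ^n with Z_λ finite and every γ ∈ ℝ^n with Z_{γ+λ} finite, the incomplete-data log-likelihood difference satisfies L(γ + λ) − L(λ) ≥ ∑_{y∈𝒴} (1 + k_λ[γ·ν] − p_λ[e^{γ·ν}]). -/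
/- Common setup: log-linear models over proof trees (complete data X) and
   queries (incomplete data Y). -/

variable {X Y : Type*}

/-- Lower bound on the log-likelihood difference via `ln x ≤ x − 1`:
`L(γ+λ) − L(λ) ≥ ∑_{y∈𝒴} (1 + k_λ[γ·ν] − p_λ[e^{γ·ν}])`. -/
theorem loglikelihood_difference_exp_bound
    {X Y : Type*} [Countable X] (Yf : X → Y)
    (p0 : X → ℝ) (hp0 : ∀ x, 0 < p0 x) (hp0sum : ∑' x : X, p0 x = 1)
    {n : ℕ} (ν : Fin n → X → ℕ)
    (𝒴 : Multiset Y) (l γ : Fin n → ℝ)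
    (hZl : Summable fun x : X => Real.exp (wdot l ν x) * p0 x)
    (hZgl : Summable fun x : X => Real.exp (wdot (γ + l) ν x) * p0 x)
    (hpos : ∀ y ∈ 𝒴, 0 < pLLY Yf p0 ν l y)
    (hksum : ∀ y ∈ 𝒴, Summable fun x : {x : X // Yf x = y} =>
      (pLL p0 ν l x.1 / pLLY Yf p0 ν l y) * wdot γ ν x.1)
    (hpsum : Summable fun x : X => pLL p0 ν l x * Real.exp (wdot γ ν x)) :
    (𝒴.map fun y => 1 + kExp Yf p0 ν l y (fun x => wdot γ ν x)
      - pExp p0 ν l (fun x => Real.exp (wdot γ ν x))).sum ≤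
    LL Yf p0 ν 𝒴 (γ + l) - LL Yf p0 ν 𝒴 l := by
  classical
  -- X is nonempty
  have hXne : Nonempty X := by
    by_contra h
    rw [not_nonempty_iff] at h
    rw [tsum_empty] at hp0sum
    exact one_ne_zero hp0sum.symm
  obtain ⟨x0⟩ := hXne
  set Z := Zpart p0 ν l with hZdef
  set Z' := Zpart p0 ν (γ + l) with hZ'def
  have hwadd : ∀ x, wdot (γ + l) ν x = wdot γ ν x + wdot l ν x := by
    intro x
    simp [wdot, add_mul, Finset.sum_add_distrib]
  have hZpos : 0 < Z :=
    Summable.tsum_pos hZl (fun x => le_of_lt (mul_pos (Real.exp_pos _) (hp0 x))) x0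
      (mul_pos (Real.exp_pos _) (hp0 x0))
  have hZ'pos : 0 < Z' :=
    Summable.tsum_pos hZgl (fun x => le_of_lt (mul_pos (Real.exp_pos _) (hp0 x))) x0
      (mul_pos (Real.exp_pos _) (hp0 x0))
  have hpLLpos : ∀ x, 0 < pLL p0 ν l x := fun x =>
    mul_pos (mul_pos (inv_pos.2 hZpos) (Real.exp_pos _)) (hp0 x)
  -- relation between pLL (γ+l) and pLL l
  have hrel : ∀ x, pLL p0 ν (γ + l) x = (Z / Z') * (pLL p0 ν l x * Real.exp (wdot γ ν x)) := by
    intro x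
    rw [pLL, pLL, hwadd, Real.exp_add, ← hZdef, ← hZ'def]
    field_simp
  -- pExp of exp(wdot γ) equals Z'/Z
  have hsLLfun : (fun x : X => pLL p0 ν l x * Real.exp (wdot γ ν x))
      = fun x => Z⁻¹ * (Real.exp (wdot (γ + l) ν x) * p0 x) := by
    funext x
    rw [pLL, hwadd, Real.exp_add]
    ring
  have hT : pExp p0 ν l (fun x => Real.exp (wdot γ ν x)) = Z'/Z := by
    rw [pExp]
    calc (∑' x : X, pLL p0 ν l x * Real.exp (wdot γ ν x))
        = ∑' x : X, Z⁻¹ * (Real.exp (wdot (γ + l) ν x) * p0 x) := by rw [← hsLLfun]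
      _ = Z⁻¹ * Z' := by rw [tsum_mul_left]; rfl
      _ = Z'/Z := by rw [div_eq_inv_mul]
  set T := pExp p0 ν l (fun x => Real.exp (wdot γ ν x)) with hTdef
  have hTpos : 0 < T := by rw [hT]; exact div_pos hZ'pos hZpos
  -- combine per-y inequalities
  rw [LL, LL, ← Multiset.sum_map_sub]
  refine Multiset.sum_map_le_sum_map _ _ (fun y hy => ?_)
  -- per-y work
  set py := pLLY Yf p0 ν l y with hpydef
  have hpy : 0 < py := hpos y hy
  -- summability on the fiber
  have hsub : Summable (fun x : {x : X // Yf x = y} => pLL p0 ν l x.1) := by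
    have : Summable (fun x : {x : X // Yf x = y} => Z⁻¹ * (Real.exp (wdot l ν x.1) * p0 x.1)) :=
      (hZl.subtype _).mul_left _
    refine this.congr (fun x => ?_)
    rw [pLL]; ring
  have hsubE : Summable (fun x : {x : X // Yf x = y} => pLL p0 ν l x.1 * Real.exp (wdot γ ν x.1)) := by
    have : Summable (fun x : {x : X // Yf x = y} => Z⁻¹ * (Real.exp (wdot (γ + l) ν x.1) * p0 x.1)) :=
      (hZgl.subtype _).mul_left _
    refine this.congr (fun x => ?_)
    rw [← congrFun hsLLfun x.1]
  -- fiber weights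
  set w := fun x : {x : X // Yf x = y} => pLL p0 ν l x.1 / py with hwdef
  have hwnn : ∀ x, 0 ≤ w x := fun x => div_nonneg (le_of_lt (hpLLpos x.1)) (le_of_lt hpy)
  have hwsummable : Summable w := by
    refine (hsub.mul_left py⁻¹).congr (fun x => ?_)
    simp [hwdef, div_eq_inv_mul]
  have hwsum : ∑' x, w x = 1 := by
    have : ∑' x : {x : X // Yf x = y}, w x = py⁻¹ * ∑' x : {x : X // Yf x = y}, pLL p0 ν l x.1 := by
      rw [← tsum_mul_left]
      exact tsum_congr (fun x => by simp [hwdef, div_eq_inv_mul])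
    rw [this]
    have hpyeq : (∑' x : {x : X // Yf x = y}, pLL p0 ν l x.1) = py := rfl
    rw [hpyeq, inv_mul_cancel₀ (ne_of_gt hpy)]
  set g := fun x : {x : X // Yf x = y} => wdot γ ν x.1 with hgdef
  have hwg : Summable (fun x => w x * g x) := hksum y hy
  set m := kExp Yf p0 ν l y (fun x => wdot γ ν x) with hmdef
  have hm : m = ∑' x, w x * g x := rfl
  -- S' and K
  set S' := ∑' x : {x : X // Yf x = y}, pLL p0 ν l x.1 * Real.exp (wdot γ ν x.1) with hS'def
  -- the fiber is nonempty
  have hfne : Nonempty {x : X // Yf x = y} := by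
    by_contra h
    rw [not_nonempty_iff] at h
    have : py = 0 := by rw [hpydef, pLLY, tsum_empty]
    exact absurd this (ne_of_gt hpy)
  obtain ⟨z0⟩ := hfne
  have hS'pos : 0 < S' :=
    Summable.tsum_pos hsubE (fun x => le_of_lt (mul_pos (hpLLpos x.1) (Real.exp_pos _))) z0
      (mul_pos (hpLLpos z0.1) (Real.exp_pos _))
  have hK : (∑' x, w x * Real.exp (g x)) = S' / py := by
    rw [hS'def, ← tsum_div_const]
    exact tsum_congr (fun x => by rw [hwdef, hgdef, div_mul_eq_mul_div])
  have hwE : Summable (fun x => w x * Real.exp (g x)) := by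
    refine (hsubE.div_const py).congr (fun x => ?_)
    rw [hwdef, hgdef, div_mul_eq_mul_div]
  -- Jensen: exp m ≤ ∑' w * exp g
  have hjensen : Real.exp m ≤ S' / py := by
    rw [← hK]
    have hpt : ∀ x, Real.exp m * (w x + w x * g x - m * w x) ≤ w x * Real.exp (g x) := by
      intro x
      have h1 : g x - m + 1 ≤ Real.exp (g x - m) := Real.add_one_le_exp _
      have h2 : Real.exp m * (g x - m + 1) ≤ Real.exp m * Real.exp (g x - m) :=
        mul_le_mul_of_nonneg_left h1 (le_of_lt (Real.exp_pos m))
      rw [← Real.exp_add] at h2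
      have h2' : Real.exp m * (g x - m + 1) ≤ Real.exp (g x) := by
        rwa [add_sub_cancel] at h2
      calc Real.exp m * (w x + w x * g x - m * w x)
          = w x * (Real.exp m * (g x - m + 1)) := by ring
        _ ≤ w x * Real.exp (g x) := mul_le_mul_of_nonneg_left h2' (hwnn x)
    have hsl : Summable (fun x => Real.exp m * (w x + w x * g x - m * w x)) :=
      (((hwsummable.add hwg).sub (hwsummable.mul_left m)).mul_left _)
    have := Summable.tsum_le_tsum hpt hsl hwE
    calc Real.exp m = Real.exp m * ((∑' x, w x) + (∑' x, w x * g x) - m * (∑' x, w x)) := by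
          rw [hwsum, ← hm]; ring
      _ = ∑' x, Real.exp m * (w x + w x * g x - m * w x) := by
          rw [tsum_mul_left, Summable.tsum_sub (hwsummable.add hwg) (hwsummable.mul_left m),
            Summable.tsum_add hwsummable hwg, tsum_mul_left]
      _ ≤ ∑' x, w x * Real.exp (g x) := this
  have hmlog : m ≤ Real.log (S' / py) :=
    (Real.le_log_iff_exp_le (div_pos hS'pos hpy)).2 hjensen
  -- pLLY (γ+l) y = (Z/Z') * S'
  have hpY' : pLLY Yf p0 ν (γ + l) y = (Z/Z') * S' := by
    rw [pLLY, hS'def, ← tsum_mul_left]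
    exact tsum_congr (fun x => hrel x.1)
  -- put everything together
  have hlogT : Real.log T ≤ T - 1 := Real.log_le_sub_one_of_pos hTpos
  have hTlog : Real.log T = Real.log Z' - Real.log Z := by
    rw [hT, Real.log_div (ne_of_gt hZ'pos) (ne_of_gt hZpos)]
  have hrhs : Real.log (pLLY Yf p0 ν (γ + l) y) - Real.log (pLLY Yf p0 ν l y)
      = Real.log (S' / py) - Real.log T := by
    rw [hpY', Real.log_mul (ne_of_gt (div_pos hZpos hZ'pos)) (ne_of_gt hS'pos),
      Real.log_div (ne_of_gt hZpos) (ne_of_gt hZ'pos),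
      Real.log_div (ne_of_gt hS'pos) (ne_of_gt hpy), hTlog, ← hpydef]
    ring
  rw [hrhs]
  have : 1 + m - T ≤ Real.log (S' / py) - Real.log T := by
    have h1 : 1 - T ≤ -Real.log T := by linarith
    linarith
  simpa [← hmdef, ← hTdef] using this
end
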